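/- Let W ≥ 1, N : ℕ, and let l : List Bool be a list of mark flags. Suppose the number of indices k such that the k-th aligned block of l is complete and fully marked is at most N. Then every contiguous run of marked entries in l has length at most W * (N + 2); precisely, for every starting position i, ((l.drop i).takeWhile id).length ≤ W * (N + 2). (This is the combinatorial core of the paper's claim that, since at most N − 1 cleanup requests can be pending with N threads, a pop operation is assured to find an unmarked node after traversing O(W·N) consecutive marked nodes, so pop completes in a bounded number of steps.) -/

import Mathlib

/-- If `W ≥ 1` and at most `N` aligned blocks of `l` are complete and fully
marked, then every contiguous run of marked (`true`) entries in `l` has length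
at most `W * (N + 2)`. -/
theorem pop_traversal_bounded
    (W N : ℕ) (hW : 1 ≤ W) (l : List Bool)
    (hN : ((Finset.range l.length).filter (fun k =>
      (k + 1) * W ≤ l.length ∧ ∀ b ∈ (l.drop (k * W)).take W, b = true)).card ≤ N) :
    ∀ i, ((l.drop i).takeWhile id).length ≤ W * (N + 2) := by
  intro i
  by_contra hL
  push_neg at hL
  set s := l.drop i with hs
  set L := (s.takeWhile id).length with hLdef
  have hW0 : 0 < W := hW
  have htake : s.takeWhile id = s.take L :=
    List.prefix_iff_eq_take.mp (List.takeWhile_prefix id)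
  have hLle : L ≤ s.length := (List.takeWhile_prefix id).length_le
  have hslen : s.length = l.length - i := List.length_drop
  have hL1 : 1 ≤ L := by
    have : 0 < W * (N + 2) := by positivity
    omega
  have hiL : i + L ≤ l.length := by
    have hi : i < l.length := by omega
    omega
  set q := i / W with hq
  have hqr : q * W ≤ i ∧ i < (q + 1) * W := by
    have h1 := Nat.div_add_mod i W
    have h2 := Nat.mod_lt i hW0
    have h3 : (q + 1) * W = W * (i / W) + W := by rw [hq]; ring
    have h4 : q * W = W * (i / W) := by rw [hq]; ring
    omega
  have hsub : Finset.Ico (q + 1) (q + 1 + (N + 1)) ⊆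
      (Finset.range l.length).filter (fun k =>
        (k + 1) * W ≤ l.length ∧ ∀ b ∈ (l.drop (k * W)).take W, b = true) := by
    intro k hk
    simp only [Finset.mem_Ico] at hk
    have hk1 : i ≤ k * W := by
      have : (q + 1) * W ≤ k * W := Nat.mul_le_mul_right W hk.1
      omega
    have hexp : (k + 1) * W = k * W + W := by ring
    have hk2 : (k + 1) * W ≤ i + L := by
      have h1 : (k + 1) * W ≤ (q + N + 2) * W := by
        apply Nat.mul_le_mul_right
        omega
      have h2 : (q + N + 2) * W = q * W + W * (N + 2) := by ring
      omega
    have hk3 : (k + 1) * W ≤ l.length := le_trans hk2 hiL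
    refine Finset.mem_filter.mpr ⟨Finset.mem_range.mpr ?_, hk3, ?_⟩
    · have : k < (k + 1) * W := by
        calc k < k + 1 := Nat.lt_succ_self k
        _ ≤ (k + 1) * W := Nat.le_mul_of_pos_right _ hW0
      omega
    · intro b hb
      set d := k * W - i with hd
      have hdW : d + W ≤ L := by omega
      have e1 : l.drop (k * W) = s.drop d := by
        rw [hs, List.drop_drop]
        congr 1
        omega
      have e2 : (l.drop (k * W)).take W = ((s.take L).drop d).take W := by
        rw [e1, List.drop_take, List.take_take]
        congr 1
        omega
      rw [e2] at hb
      have hb1 : b ∈ (s.take L).drop d := List.mem_of_mem_take hb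
      have hb2 : b ∈ s.take L := List.mem_of_mem_drop hb1
      rw [← htake] at hb2
      exact List.mem_takeWhile_imp hb2
  have hcard : N + 1 ≤ ((Finset.range l.length).filter (fun k =>
      (k + 1) * W ≤ l.length ∧ ∀ b ∈ (l.drop (k * W)).take W, b = true)).card := by
    have := Finset.card_le_card hsub
    rwa [Nat.card_Ico, Nat.add_sub_cancel_left] at this
  omega
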